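/- For standard ribbon tableaux T₁, T₂ of the same generalized composition shape 𝛂, define T₁ ≤ T₂ iff T₂ = π_σ · T₁ for some σ ∈ S_n (under the H_n(0)-action on SRTx). Then ≤ is a partial order on the set of SRTx of shape 𝛂, and the source tableau T_𝛂 (filled with 1,...,n down each column from left to right, i.e., column by column top to bottom) is its unique minimum. -/

import Mathlib

/-- The cells of the ribbon diagram of a composition `α`, as pairs
`(column, height)` (0-based columns from the left, heights increasing upward):
column `j` occupies the heights `[(α₁+⋯+α_j) - j, (α₁+⋯+α_{j+1}) - j - 1]`,
so that consecutive columns overlap in exactly one row, each column sitting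
above-right of the previous one. -/
def ribbonCells (α : List ℕ) : Set (ℕ × ℕ) :=
  {jh | jh.1 < α.length ∧ (α.take jh.1).sum - jh.1 ≤ jh.2 ∧
        jh.2 < (α.take jh.1).sum - jh.1 + α.getD jh.1 0}

/-- Column offset of the `m`-th component of a generalized ribbon diagram. -/
def colOff (L : List (List ℕ)) (m : ℕ) : ℕ := ((L.take m).map List.length).sum

/-- Height offset of the `m`-th component of a generalized ribbon diagram
(each component is placed strictly to the northeast of the previous one,
one row above its top). -/
def htOff (L : List (List ℕ)) (m : ℕ) : ℕ :=
  ((L.take m).map fun l => l.sum - l.length + 1).sum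

/-- The cells of the generalized ribbon diagram of `𝛂 = α⁽¹⁾ ⊕ ⋯ ⊕ α⁽ᵏ⁾`. -/
def gribbonCells (L : List (List ℕ)) : Set (ℕ × ℕ) :=
  {jh | ∃ m < L.length, ∃ c ∈ ribbonCells (L.getD m []),
    jh = (colOff L m + c.1, htOff L m + c.2)}

/-- The size `n` of the generalized composition `𝛂`. -/
def srtSize (L : List (List ℕ)) : ℕ := (L.map List.sum).sum

/-- A standard ribbon tableau of shape `𝛂`, encoded by the position
`p e = (column, height)` of each entry `e ∈ {1,…,n}` (heights increase upward):
entries fill the diagram bijectively, increase from left to right in each row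
(cells of equal height), and increase from top to bottom in each column
(i.e. decrease with height).  (Entries outside `{1,…,n}` are normalized.) -/
def IsSRT (L : List (List ℕ)) (p : ℕ → ℕ × ℕ) : Prop :=
  Set.BijOn p (Set.Icc 1 (srtSize L)) (gribbonCells L) ∧
  (∀ a ∈ Set.Icc 1 (srtSize L), ∀ b ∈ Set.Icc 1 (srtSize L),
    (p a).2 = (p b).2 → (p a).1 < (p b).1 → a < b) ∧
  (∀ a ∈ Set.Icc 1 (srtSize L), ∀ b ∈ Set.Icc 1 (srtSize L),
    (p a).1 = (p b).1 → (p b).2 < (p a).2 → a < b) ∧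
  (∀ e : ℕ, e ∉ Set.Icc 1 (srtSize L) → p e = (0, 0))

/-- One application of a generator `π_i` (`1 ≤ i ≤ n-1`) sending the basis
element `T` to the basis element `T'` (not to `0`): either `i ∉ Des(T)`
(`i` strictly above `i+1`, i.e. `height(i+1) < height(i)`) and `T' = T`, or `i`
is strictly below `i+1` and `T'` is obtained from `T` by swapping `i` and `i+1`. -/
def srtStep (L : List (List ℕ))
    (T T' : {p : ℕ → ℕ × ℕ // IsSRT L p}) : Prop :=
  ∃ i : ℕ, 1 ≤ i ∧ i + 1 ≤ srtSize L ∧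
    (((T.1 (i + 1)).2 < (T.1 i).2 ∧ T' = T) ∨
     ((T.1 i).2 < (T.1 (i + 1)).2 ∧ T'.1 = T.1 ∘ (Equiv.swap i (i + 1))))

/-- `T ≤ T'` iff `T' = π_σ · T` for some `σ ∈ S_n`. -/
def srtLe (L : List (List ℕ)) :
    {p : ℕ → ℕ × ℕ // IsSRT L p} → {p : ℕ → ℕ × ℕ // IsSRT L p} → Prop :=
  Relation.ReflTransGen (srtStep L)

/-- `T` is the source tableau `T_𝛂`: the diagram is filled with `1, 2, …, n`
going down each column, columns taken from left to right (smaller column first;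
within a column, larger height first). -/
def IsSourceSRT (L : List (List ℕ)) (T : {p : ℕ → ℕ × ℕ // IsSRT L p}) : Prop :=
  ∀ a ∈ Set.Icc 1 (srtSize L), ∀ b ∈ Set.Icc 1 (srtSize L),
    ((T.1 a).1 < (T.1 b).1 ∨ ((T.1 a).1 = (T.1 b).1 ∧ (T.1 b).2 < (T.1 a).2)) →
    a < b

set_option linter.dupNamespace false
namespace Stmt18
def cellLt (x y : ℕ × ℕ) : Prop := x.1 < y.1 ∨ (x.1 = y.1 ∧ y.2 < x.2)

lemma cellLt_irrefl (x : ℕ × ℕ) : ¬ cellLt x x := by simp [cellLt]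

lemma cellLt_asymm {x y : ℕ × ℕ} (h : cellLt x y) : ¬ cellLt y x := by
  rcases x with ⟨a,b⟩; rcases y with ⟨c,d⟩
  simp only [cellLt] at *; omega

lemma cellLt_trans {x y z : ℕ × ℕ} (h1 : cellLt x y) (h2 : cellLt y z) : cellLt x z := by
  rcases x with ⟨a,b⟩; rcases y with ⟨c,d⟩; rcases z with ⟨e,f⟩
  simp only [cellLt] at *; omega

lemma cellLt_trichotomy (x y : ℕ × ℕ) : cellLt x y ∨ x = y ∨ cellLt y x := by
  rcases x with ⟨a,b⟩; rcases y with ⟨c,d⟩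
  simp only [cellLt, Prod.mk.injEq]; omega

lemma cellLt_ne {x y : ℕ × ℕ} (h : cellLt x y) : x ≠ y := by
  rintro rfl; exact cellLt_irrefl x h

/-- prefix sums of a positive list grow at least linearly -/
lemma sum_take_mono {α : List ℕ} (hα : ∀ x ∈ α, 0 < x) :
    ∀ {a b : ℕ}, a ≤ b → b ≤ α.length → (α.take a).sum + (b - a) ≤ (α.take b).sum := by
  intro a b hab hb
  induction b with
  | zero => interval_cases a; simp
  | succ k ih =>
    rcases Nat.eq_or_lt_of_le hab with rfl | h
    · simp
    · have hk : k < α.length := hb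
      have hs := List.sum_take_succ α k hk
      have hpos : 0 < α[k] := hα _ (α.getElem_mem hk)
      have := ih (by omega) (by omega)
      omega

lemma self_le_sum_take {α : List ℕ} (hα : ∀ x ∈ α, 0 < x) {j : ℕ} (hj : j ≤ α.length) :
    j ≤ (α.take j).sum := by
  have := sum_take_mono hα (Nat.zero_le j) hj
  simpa using this

/-- monotonicity of prefix sums -/
lemma sum_take_le {α : List ℕ} : ∀ {a b : ℕ}, a ≤ b → (α.take a).sum ≤ (α.take b).sum := by
  intro a b hab
  induction b with
  | zero => interval_cases a; simp
  | succ k ih =>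
    rcases Nat.eq_or_lt_of_le hab with rfl | h
    · exact le_refl _
    · have h1 := ih (by omega)
      by_cases hk : k < α.length
      · have := List.sum_take_succ α k hk
        omega
      · have h2 : α.take (k+1) = α.take k := by
          rw [List.take_of_length_le (by omega), List.take_of_length_le (by omega)]
        rw [h2]; exact h1


def ribbonList (α : List ℕ) : List (ℕ × ℕ) :=
  (List.range α.length).flatMap fun j =>
    (List.range (α.getD j 0)).map fun t => (j, (α.take (j+1)).sum - (j + 1) - t)

lemma mem_ribbonList {α : List ℕ} (hα : ∀ x ∈ α, 0 < x) {c : ℕ × ℕ} :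
    c ∈ ribbonList α ↔ c ∈ ribbonCells α := by
  rcases c with ⟨j, h⟩
  simp only [ribbonList, List.mem_flatMap, List.mem_range, List.mem_map, ribbonCells,
    Set.mem_setOf_eq, Prod.mk.injEq]
  constructor
  · rintro ⟨j', hj', t, ht, rfl, rfl⟩
    have hs := List.sum_take_succ α j' hj'
    have hg : α.getD j' 0 = α[j'] := List.getD_eq_getElem α 0 hj'
    have hsl := self_le_sum_take hα (le_of_lt hj')
    refine ⟨hj', ?_, ?_⟩ <;> omega
  · rintro ⟨hj, hlo, hhi⟩
    have hs := List.sum_take_succ α j hj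
    have hg : α.getD j 0 = α[j] := List.getD_eq_getElem α 0 hj
    have hsl := self_le_sum_take hα (le_of_lt hj)
    exact ⟨j, hj, (α.take (j+1)).sum - (j+1) - h, by omega, rfl, by omega⟩

lemma map_range_getD (α : List ℕ) : (List.range α.length).map (fun j => α.getD j 0) = α := by
  apply List.ext_getElem
  · simp
  · intro n h1 h2
    simp only [List.getElem_map, List.getElem_range]
    exact List.getD_eq_getElem α 0 h2

lemma length_ribbonList (α : List ℕ) : (ribbonList α).length = α.sum := by
  rw [ribbonList, List.length_flatMap]
  simp only [Function.comp_def, List.length_map, List.length_range]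
  rw [map_range_getD]

lemma pairwise_ribbonList {α : List ℕ} (hα : ∀ x ∈ α, 0 < x) :
    (ribbonList α).Pairwise cellLt := by
  rw [ribbonList, List.pairwise_flatMap]
  constructor
  · intro j hj
    rw [List.mem_range] at hj
    rw [List.pairwise_iff_getElem]
    intro a b ha hb hab
    simp only [List.length_map, List.length_range] at ha hb
    simp only [List.getElem_map, List.getElem_range]
    have hs := List.sum_take_succ α j hj
    have hg : α.getD j 0 = α[j] := List.getD_eq_getElem α 0 hj
    have hsl := self_le_sum_take hα (le_of_lt hj)
    exact Or.inr ⟨rfl, by omega⟩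
  · refine (List.pairwise_lt_range).imp ?_
    intro j1 j2 hlt x hx y hy
    rw [List.mem_map] at hx hy
    obtain ⟨t1, _, rfl⟩ := hx
    obtain ⟨t2, _, rfl⟩ := hy
    exact Or.inl hlt

def gribbonList (L : List (List ℕ)) : List (ℕ × ℕ) :=
  (List.range L.length).flatMap fun m =>
    (ribbonList (L.getD m [])).map fun c => (colOff L m + c.1, htOff L m + c.2)

lemma getD_mem (L : List (List ℕ)) {m : ℕ} (hm : m < L.length) : L.getD m [] ∈ L := by
  rw [List.getD_eq_getElem L [] hm]; exact L.getElem_mem hm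

lemma pos_comp {L : List (List ℕ)} (hL : ∀ l ∈ L, l ≠ [] ∧ ∀ x ∈ l, 0 < x) {m : ℕ}
    (hm : m < L.length) : ∀ x ∈ L.getD m [], 0 < x := (hL _ (getD_mem L hm)).2

lemma mem_gribbonList {L : List (List ℕ)} (hL : ∀ l ∈ L, l ≠ [] ∧ ∀ x ∈ l, 0 < x)
    {c : ℕ × ℕ} : c ∈ gribbonList L ↔ c ∈ gribbonCells L := by
  simp only [gribbonList, List.mem_flatMap, List.mem_range, List.mem_map, gribbonCells,
    Set.mem_setOf_eq]
  constructor
  · rintro ⟨m, hm, x, hx, rfl⟩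
    exact ⟨m, hm, x, (mem_ribbonList (pos_comp hL hm)).1 hx, rfl⟩
  · rintro ⟨m, hm, x, hx, rfl⟩
    exact ⟨m, hm, x, (mem_ribbonList (pos_comp hL hm)).2 hx, rfl⟩

lemma length_gribbonList (L : List (List ℕ)) : (gribbonList L).length = srtSize L := by
  rw [gribbonList, List.length_flatMap]
  simp only [Function.comp_def, List.length_map, length_ribbonList]
  have : (List.range L.length).map (fun m => (L.getD m []).sum) = L.map List.sum := by
    apply List.ext_getElem
    · simp
    · intro n h1 h2
      simp only [List.getElem_map, List.getElem_range]
      rw [List.getD_eq_getElem L [] (by simpa using h2)]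
  rw [this, srtSize]

lemma colOff_succ {L : List (List ℕ)} {m : ℕ} (hm : m < L.length) :
    colOff L (m+1) = colOff L m + (L.getD m []).length := by
  rw [colOff, colOff, List.map_take, List.map_take,
    List.sum_take_succ _ m (by simpa using hm)]
  congr 1
  rw [List.getD_eq_getElem L [] hm]
  simp

lemma htOff_succ {L : List (List ℕ)} {m : ℕ} (hm : m < L.length) :
    htOff L (m+1) = htOff L m + ((L.getD m []).sum - (L.getD m []).length + 1) := by
  rw [htOff, htOff, List.map_take, List.map_take,
    List.sum_take_succ _ m (by simpa using hm)]
  congr 1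
  rw [List.getD_eq_getElem L [] hm]
  simp

lemma colOff_le {L : List (List ℕ)} {a b : ℕ} (h : a ≤ b) : colOff L a ≤ colOff L b := by
  rw [colOff, colOff, List.map_take, List.map_take]; exact sum_take_le h

lemma htOff_le {L : List (List ℕ)} {a b : ℕ} (h : a ≤ b) : htOff L a ≤ htOff L b := by
  rw [htOff, htOff, List.map_take, List.map_take]; exact sum_take_le h

lemma height_add_length_le {α : List ℕ} (hα : ∀ x ∈ α, 0 < x) {c : ℕ × ℕ}
    (hc : c ∈ ribbonCells α) : c.2 + α.length ≤ α.sum := by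
  obtain ⟨hj, hlo, hhi⟩ := hc
  have hs := List.sum_take_succ α c.1 hj
  have hg : α.getD c.1 0 = α[c.1] := List.getD_eq_getElem α 0 hj
  have hsl := self_le_sum_take hα (le_of_lt hj)
  have hmono := sum_take_mono hα (show c.1+1 ≤ α.length from hj) (le_refl _)
  have hfull : (α.take α.length).sum = α.sum := by rw [List.take_length]
  omega

lemma pairwise_gribbonList {L : List (List ℕ)} (hL : ∀ l ∈ L, l ≠ [] ∧ ∀ x ∈ l, 0 < x) :
    (gribbonList L).Pairwise cellLt := by
  rw [gribbonList, List.pairwise_flatMap]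
  constructor
  · intro m hm
    rw [List.mem_range] at hm
    rw [List.pairwise_map]
    refine (pairwise_ribbonList (pos_comp hL hm)).imp ?_
    intro a b h
    rcases h with h | ⟨h1, h2⟩
    · exact Or.inl (by omega)
    · exact Or.inr ⟨by omega, by omega⟩
  · rw [List.pairwise_iff_getElem]
    intro i j hi hj hij
    simp only [List.length_range] at hi hj
    simp only [List.getElem_range]
    intro x hx y hy
    rw [List.mem_map] at hx hy
    obtain ⟨cx, hcx, rfl⟩ := hx
    obtain ⟨cy, hcy, rfl⟩ := hy
    left
    have h1 : cx.1 < (L.getD i []).length := ((mem_ribbonList (pos_comp hL hi)).1 hcx).1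
    have h2 := colOff_succ hi
    have h3 : colOff L (i+1) ≤ colOff L j := colOff_le (by omega)
    simp only []
    omega

lemma left_le_height {L : List (List ℕ)} (hL : ∀ l ∈ L, l ≠ [] ∧ ∀ x ∈ l, 0 < x)
    {x y : ℕ × ℕ} (hx : x ∈ gribbonCells L) (hy : y ∈ gribbonCells L)
    (h : y.1 < x.1) : y.2 ≤ x.2 := by
  obtain ⟨m, hm, c, hc, rfl⟩ := hx
  obtain ⟨m', hm', c', hc', rfl⟩ := hy
  simp only [] at h ⊢
  rcases lt_trichotomy m' m with hmm | heq | hmm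
  · -- strictly earlier component: strictly below
    have hmax := height_add_length_le (pos_comp hL hm') hc'
    have hsucc := htOff_succ hm'
    have hle : htOff L (m'+1) ≤ htOff L m := htOff_le (by omega)
    omega
  · -- same component
    subst heq
    have hα := pos_comp hL hm
    have hcc : c'.1 < c.1 := by omega
    obtain ⟨hj, hlo, hhi⟩ := hc
    obtain ⟨hj', hlo', hhi'⟩ := hc'
    have e1 := List.sum_take_succ (L.getD m' []) c'.1 hj'
    have g1 : (L.getD m' []).getD c'.1 0 = (L.getD m' [])[c'.1] :=
      List.getD_eq_getElem _ 0 hj'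
    have m1 := sum_take_mono hα (show c'.1+1 ≤ c.1 from hcc) (le_of_lt hj)
    have s1 := self_le_sum_take hα (le_of_lt hj')
    have s2 := self_le_sum_take hα (le_of_lt hj)
    omega
  · -- later component: contradiction with column inequality
    have h1 : c.1 < (L.getD m []).length := hc.1
    have h2 := colOff_succ hm
    have h3 : colOff L (m+1) ≤ colOff L m' := colOff_le (by omega)
    omega

variable {L : List (List ℕ)}

def srcP (L : List (List ℕ)) : ℕ → ℕ × ℕ := fun e =>
  if 1 ≤ e ∧ e ≤ srtSize L then (gribbonList L).getD (e-1) (0,0) else (0,0)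

lemma srcP_eq {e : ℕ} (he : e ∈ Set.Icc 1 (srtSize L)) :
    srcP L e = (gribbonList L)[e-1]'(by
      rw [length_gribbonList]; rcases he with ⟨h1, h2⟩; omega) := by
  rcases he with ⟨h1, h2⟩
  rw [srcP]
  simp only [if_pos (And.intro h1 h2)]
  exact List.getD_eq_getElem _ _ _

lemma srcP_lt (hL : ∀ l ∈ L, l ≠ [] ∧ ∀ x ∈ l, 0 < x) {a b : ℕ}
    (ha : a ∈ Set.Icc 1 (srtSize L)) (hb : b ∈ Set.Icc 1 (srtSize L)) (hab : a < b) :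
    cellLt (srcP L a) (srcP L b) := by
  rw [srcP_eq ha, srcP_eq hb]
  have hp := pairwise_gribbonList hL
  rw [List.pairwise_iff_getElem] at hp
  apply hp
  rcases ha with ⟨h1, _⟩
  omega

lemma srcP_mapsTo (hL : ∀ l ∈ L, l ≠ [] ∧ ∀ x ∈ l, 0 < x) {e : ℕ}
    (he : e ∈ Set.Icc 1 (srtSize L)) : srcP L e ∈ gribbonCells L := by
  rw [srcP_eq he]
  exact (mem_gribbonList hL).1 (List.getElem_mem _)

lemma srcP_lt_iff (hL : ∀ l ∈ L, l ≠ [] ∧ ∀ x ∈ l, 0 < x) {a b : ℕ}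
    (ha : a ∈ Set.Icc 1 (srtSize L)) (hb : b ∈ Set.Icc 1 (srtSize L))
    (h : cellLt (srcP L a) (srcP L b)) : a < b := by
  rcases lt_trichotomy a b with hab | rfl | hab
  · exact hab
  · exact absurd h (cellLt_irrefl _)
  · have := srcP_lt hL hb ha hab
    rcases h with h | ⟨h1, h2⟩ <;> rcases this with h' | ⟨h1', h2'⟩ <;> omega

lemma isSRT_srcP (hL : ∀ l ∈ L, l ≠ [] ∧ ∀ x ∈ l, 0 < x) : IsSRT L (srcP L) := by
  refine ⟨⟨fun e he => srcP_mapsTo hL he, ?_, ?_⟩, ?_, ?_, ?_⟩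
  · -- InjOn
    intro a ha b hb heq
    rcases lt_trichotomy a b with hab | rfl | hab
    · have := srcP_lt hL ha hb hab; rw [heq] at this; exact absurd this (cellLt_irrefl _)
    · rfl
    · have := srcP_lt hL hb ha hab; rw [heq] at this; exact absurd this (cellLt_irrefl _)
  · -- SurjOn
    intro x hx
    have hx' : x ∈ gribbonList L := (mem_gribbonList hL).2 hx
    rw [List.mem_iff_getElem] at hx'
    obtain ⟨k, hk, hkx⟩ := hx'
    rw [length_gribbonList] at hk
    refine ⟨k+1, ⟨by omega, by omega⟩, ?_⟩
    rw [srcP_eq (Set.mem_Icc.2 ⟨by omega, by omega⟩)]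
    simpa using hkx
  · intro a ha b hb h2 h1
    exact srcP_lt_iff hL ha hb (Or.inl h1)
  · intro a ha b hb h1 h2
    exact srcP_lt_iff hL ha hb (Or.inr ⟨h1, h2⟩)
  · intro e he
    rw [Set.mem_Icc] at he
    rw [srcP, if_neg (by omega)]

lemma mono_of_source {T : {p : ℕ → ℕ × ℕ // IsSRT L p}} (hT : IsSourceSRT L T)
    {a b : ℕ} (ha : a ∈ Set.Icc 1 (srtSize L)) (hb : b ∈ Set.Icc 1 (srtSize L))
    (hab : a < b) : cellLt (T.1 a) (T.1 b) := by
  rcases cellLt_trichotomy (T.1 a) (T.1 b) with h | h | h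
  · exact h
  · have := T.2.1.2.1 ha hb h
    omega
  · have := hT b hb a ha h
    omega

lemma source_unique (T₀ T₁ : {p : ℕ → ℕ × ℕ // IsSRT L p})
    (h₀ : IsSourceSRT L T₀) (h₁ : IsSourceSRT L T₁) : T₀ = T₁ := by
  have key : ∀ e, e ∈ Set.Icc 1 (srtSize L) → T₀.1 e = T₁.1 e := by
    intro e
    induction e using Nat.strong_induction_on with
    | _ e ih =>
      intro he
      by_contra hne
      rcases cellLt_trichotomy (T₀.1 e) (T₁.1 e) with hlt | heq | hlt
      · have hmem : T₀.1 e ∈ gribbonCells L := T₀.2.1.mapsTo he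
        obtain ⟨a, ha, hae⟩ := T₁.2.1.surjOn hmem
        have hc : cellLt (T₁.1 a) (T₁.1 e) := by rw [hae]; exact hlt
        have hlt' : a < e := h₁ a ha e he hc
        have := ih a hlt' ha
        have : T₀.1 a = T₀.1 e := by rw [this, hae]
        have := T₀.2.1.injOn ha he this
        omega
      · exact hne heq
      · have hmem : T₁.1 e ∈ gribbonCells L := T₁.2.1.mapsTo he
        obtain ⟨a, ha, hae⟩ := T₀.2.1.surjOn hmem
        have hc : cellLt (T₀.1 a) (T₀.1 e) := by rw [hae]; exact hlt
        have hlt' : a < e := h₀ a ha e he hc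
        have := ih a hlt' ha
        have : T₁.1 a = T₁.1 e := by rw [← this, hae]
        have := T₁.2.1.injOn ha he this
        omega
  apply Subtype.ext
  funext e
  by_cases he : e ∈ Set.Icc 1 (srtSize L)
  · exact key e he
  · rw [T₀.2.2.2.2 e he, T₁.2.2.2.2 e he]

lemma swap_bijOn {i n : ℕ} (h1 : 1 ≤ i) (h2 : i + 1 ≤ n) :
    Set.BijOn (Equiv.swap i (i+1)) (Set.Icc 1 n) (Set.Icc 1 n) := by
  have hmaps : Set.MapsTo (Equiv.swap i (i+1)) (Set.Icc 1 n) (Set.Icc 1 n) := by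
    intro e he
    rcases Set.mem_Icc.1 he with ⟨he1, he2⟩
    by_cases hei : e = i
    · subst hei; rw [Equiv.swap_apply_left]; exact Set.mem_Icc.2 ⟨by omega, by omega⟩
    · by_cases hei1 : e = i + 1
      · subst hei1; rw [Equiv.swap_apply_right]; exact Set.mem_Icc.2 ⟨by omega, by omega⟩
      · rw [Equiv.swap_apply_of_ne_of_ne hei hei1]; exact he
  refine ⟨hmaps, (Equiv.injective _).injOn, ?_⟩
  intro x hx
  refine ⟨Equiv.swap i (i+1) x, hmaps hx, ?_⟩
  simp

/-- value table for the swap -/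
lemma swap_val (i e : ℕ) :
    (Equiv.swap i (i+1)) e = if e = i then i+1 else if e = i+1 then i else e := by
  by_cases hei : e = i
  · subst hei; simp
  · by_cases hei1 : e = i + 1
    · subst hei1; simp [Equiv.swap_apply_right]
    · rw [Equiv.swap_apply_of_ne_of_ne hei hei1, if_neg hei, if_neg hei1]

lemma swap_isSRT {p : ℕ → ℕ × ℕ} (hp : IsSRT L p) {i : ℕ} (h1 : 1 ≤ i)
    (h2 : i + 1 ≤ srtSize L) (hh : (p (i+1)).2 ≠ (p i).2) (hc : (p i).1 ≠ (p (i+1)).1) :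
    IsSRT L (p ∘ Equiv.swap i (i+1)) := by
  have hswap := swap_bijOn (n := srtSize L) h1 h2
  refine ⟨hp.1.comp hswap, ?_, ?_, ?_⟩
  · -- rows
    intro a ha b hb hsnd hfst
    simp only [Function.comp_apply] at hsnd hfst
    have ha' := hswap.mapsTo ha
    have hb' := hswap.mapsTo hb
    have hmain := hp.2.1 _ ha' _ hb' hsnd hfst
    rw [swap_val] at hmain
    rw [swap_val] at hmain
    by_cases hai : a = i <;> by_cases hai1 : a = i + 1 <;>
      by_cases hbi : b = i <;> by_cases hbi1 : b = i + 1 <;>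
      simp_all <;> try omega
  · -- columns
    intro a ha b hb hfst hsnd
    simp only [Function.comp_apply] at hsnd hfst
    have ha' := hswap.mapsTo ha
    have hb' := hswap.mapsTo hb
    have hmain := hp.2.2.1 _ ha' _ hb' hfst hsnd
    rw [swap_val] at hmain
    rw [swap_val] at hmain
    by_cases hai : a = i <;> by_cases hai1 : a = i + 1 <;>
      by_cases hbi : b = i <;> by_cases hbi1 : b = i + 1 <;>
      simp_all <;> try omega
  · intro e he
    have : (Equiv.swap i (i+1)) e = e := by
      rw [swap_val]
      rw [Set.mem_Icc] at he
      rw [if_neg (by omega), if_neg (by omega)]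
    simp only [Function.comp_apply, this]
    exact hp.2.2.2 e he

/-- the height bound -/
def hBound (L : List (List ℕ)) : ℕ := ((gribbonList L).map Prod.snd).sum

lemma height_le_hBound (hL : ∀ l ∈ L, l ≠ [] ∧ ∀ x ∈ l, 0 < x) {x : ℕ × ℕ}
    (hx : x ∈ gribbonCells L) : x.2 ≤ hBound L := by
  have : x.2 ∈ (gribbonList L).map Prod.snd :=
    List.mem_map_of_mem ((mem_gribbonList hL).2 hx)
  exact List.single_le_sum (fun _ _ => Nat.zero_le _) _ this

/-- the decreasing statistic -/
def fstat (L : List (List ℕ)) (T : {p : ℕ → ℕ × ℕ // IsSRT L p}) : ℕ :=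
  ∑ e ∈ Finset.Icc 1 (srtSize L), e * (T.1 e).2

def NBound (L : List (List ℕ)) : ℕ := ∑ e ∈ Finset.Icc 1 (srtSize L), e * hBound L

lemma fstat_le_NBound (hL : ∀ l ∈ L, l ≠ [] ∧ ∀ x ∈ l, 0 < x)
    (T : {p : ℕ → ℕ × ℕ // IsSRT L p}) : fstat L T ≤ NBound L := by
  apply Finset.sum_le_sum
  intro e he
  rw [Finset.mem_Icc] at he
  have : T.1 e ∈ gribbonCells L := T.2.1.mapsTo (Set.mem_Icc.2 he)
  exact Nat.mul_le_mul_left e (height_le_hBound hL this)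

lemma fstat_swap {T U : {p : ℕ → ℕ × ℕ // IsSRT L p}} {i : ℕ} (h1 : 1 ≤ i)
    (h2 : i + 1 ≤ srtSize L) (hlt : (T.1 i).2 < (T.1 (i+1)).2)
    (hU : U.1 = T.1 ∘ Equiv.swap i (i+1)) : fstat L U < fstat L T := by
  classical
  have hsub : ({i, i+1} : Finset ℕ) ⊆ Finset.Icc 1 (srtSize L) := by
    intro x hx
    rw [Finset.mem_insert, Finset.mem_singleton] at hx
    rw [Finset.mem_Icc]
    rcases hx with rfl | rfl <;> omega
  have hne : i ≠ i + 1 := by omega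
  have key : ∀ (q : ℕ → ℕ × ℕ),
      ∑ e ∈ Finset.Icc 1 (srtSize L), e * (q e).2
      = (∑ e ∈ Finset.Icc 1 (srtSize L) \ {i, i+1}, e * (q e).2)
        + (i * (q i).2 + (i+1) * (q (i+1)).2) := by
    intro q
    rw [← Finset.sum_sdiff hsub]
    congr 1
    rw [Finset.sum_pair hne]
  rw [fstat, fstat, key U.1, key T.1]
  have hoff : ∀ e ∈ Finset.Icc 1 (srtSize L) \ {i, i+1}, e * (U.1 e).2 = e * (T.1 e).2 := by
    intro e he
    rw [Finset.mem_sdiff, Finset.mem_insert, Finset.mem_singleton] at he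
    rw [hU]
    simp only [Function.comp_apply, swap_val]
    rw [if_neg (by tauto), if_neg (by tauto)]
  rw [Finset.sum_congr rfl hoff]
  apply Nat.add_lt_add_left
  have e1 : U.1 i = T.1 (i+1) := by rw [hU]; simp only [Function.comp_apply, swap_val]; simp
  have e2 : U.1 (i+1) = T.1 i := by
    rw [hU]; simp [swap_val]
  rw [e1, e2]
  calc i * (T.1 (i+1)).2 + (i+1) * (T.1 i).2
      = i * (T.1 (i+1)).2 + i * (T.1 i).2 + (T.1 i).2 := by ring
    _ < i * (T.1 i).2 + i * (T.1 (i+1)).2 + (T.1 (i+1)).2 := by omega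
    _ = i * (T.1 i).2 + (i+1) * (T.1 (i+1)).2 := by ring

lemma step_fstat {T U : {p : ℕ → ℕ × ℕ // IsSRT L p}} (h : srtStep L T U) :
    U = T ∨ fstat L U < fstat L T := by
  obtain ⟨i, h1, h2, hcase⟩ := h
  rcases hcase with ⟨_, rfl⟩ | ⟨hlt, hU⟩
  · exact Or.inl rfl
  · exact Or.inr (fstat_swap h1 h2 hlt hU)

lemma fstat_le_of_srtLe {T U : {p : ℕ → ℕ × ℕ // IsSRT L p}} (h : srtLe L T U) :
    fstat L U ≤ fstat L T := by
  induction h with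
  | refl => exact le_refl _
  | tail _ hstep ih =>
    rcases step_fstat hstep with rfl | hlt
    · exact ih
    · omega

lemma eq_of_srtLe_fstat {T U : {p : ℕ → ℕ × ℕ // IsSRT L p}} (h : srtLe L T U)
    (hf : fstat L T ≤ fstat L U) : T = U := by
  induction h with
  | refl => rfl
  | @tail V W hTV hstep ih =>
    have hVT : fstat L V ≤ fstat L T := fstat_le_of_srtLe hTV
    rcases step_fstat hstep with rfl | hlt
    · exact ih hf
    · omega

lemma source_or_pred (hL : ∀ l ∈ L, l ≠ [] ∧ ∀ x ∈ l, 0 < x)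
    (T : {p : ℕ → ℕ × ℕ // IsSRT L p}) :
    IsSourceSRT L T ∨ ∃ i, 1 ≤ i ∧ i + 1 ≤ srtSize L ∧
      (T.1 (i+1)).2 < (T.1 i).2 ∧ (T.1 i).1 ≠ (T.1 (i+1)).1 := by
  by_cases hex : ∃ i, 1 ≤ i ∧ i + 1 ≤ srtSize L ∧
      (T.1 (i+1)).2 < (T.1 i).2 ∧ (T.1 i).1 ≠ (T.1 (i+1)).1
  · exact Or.inr hex
  push_neg at hex
  left
  have hcons : ∀ i, 1 ≤ i → i + 1 ≤ srtSize L → cellLt (T.1 i) (T.1 (i+1)) := by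
    intro i hi1 hi2
    have hi : i ∈ Set.Icc 1 (srtSize L) := Set.mem_Icc.2 ⟨hi1, by omega⟩
    have hi' : i+1 ∈ Set.Icc 1 (srtSize L) := Set.mem_Icc.2 ⟨by omega, hi2⟩
    have hne : T.1 i ≠ T.1 (i+1) := fun heq => by
      have := T.2.1.injOn hi hi' heq; omega
    by_cases hcol : (T.1 i).1 = (T.1 (i+1)).1
    · right
      refine ⟨hcol, ?_⟩
      rcases lt_trichotomy (T.1 (i+1)).2 (T.1 i).2 with h | h | h
      · exact h
      · exact absurd (Prod.ext_iff.2 ⟨hcol, h.symm⟩) hne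
      · have := T.2.2.2.1 (i+1) hi' i hi hcol.symm h; omega
    · have hnotlt : ¬ (T.1 (i+1)).2 < (T.1 i).2 := fun h => hcol (hex i hi1 hi2 h)
      left
      rcases lt_trichotomy (T.1 i).1 (T.1 (i+1)).1 with h | h | h
      · exact h
      · exact absurd h hcol
      · have hgle := left_le_height hL (T.2.1.mapsTo hi) (T.2.1.mapsTo hi') h
        have heq : (T.1 i).2 = (T.1 (i+1)).2 := by omega
        have := T.2.2.1 (i+1) hi' i hi heq.symm h
        omega
  have hall : ∀ b a, 1 ≤ a → a < b → b ≤ srtSize L → cellLt (T.1 a) (T.1 b) := by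
    intro b
    induction b with
    | zero => intro a ha hab hb; exact absurd hab (by omega)
    | succ k ih =>
      intro a ha hab hb
      rcases Nat.lt_or_ge a k with h | h
      · exact cellLt_trans (ih a ha h (by omega)) (hcons k (by omega) hb)
      · have hak : a = k := by omega
        subst hak; exact hcons a ha hb
  intro a ha b hb hyp
  have hyp' : cellLt (T.1 a) (T.1 b) := hyp
  rw [Set.mem_Icc] at ha hb
  rcases lt_trichotomy a b with h | heq | h
  · exact h
  · subst heq; exact absurd hyp' (cellLt_irrefl _)
  · have := hall a b hb.1 h ha.2
    rcases hyp' with h' | ⟨h1, h2⟩ <;> rcases this with h'' | ⟨h3, h4⟩ <;> omega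


end Stmt18

/-- the relation `T ≤ T' ⟺ T' = π_σ · T` for some `σ ∈ S_n` is a
partial order on the standard ribbon tableaux of shape `𝛂`, and the source
tableau `T_𝛂` is its unique minimum. -/
theorem stmt18 (L : List (List ℕ)) (hL : ∀ l ∈ L, l ≠ [] ∧ ∀ x ∈ l, 0 < x) :
    (∀ T, srtLe L T T) ∧
    (∀ T U V, srtLe L T U → srtLe L U V → srtLe L T V) ∧
    (∀ T U, srtLe L T U → srtLe L U T → T = U) ∧
    (∃ T₀, IsSourceSRT L T₀) ∧
    (∀ T₀, IsSourceSRT L T₀ → ∀ T, srtLe L T₀ T) := by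
  refine ⟨fun T => Relation.ReflTransGen.refl,
    fun T U V h1 h2 => Relation.ReflTransGen.trans h1 h2,
    fun T U h1 h2 => Stmt18.eq_of_srtLe_fstat h1 (Stmt18.fstat_le_of_srtLe h2),
    ⟨⟨Stmt18.srcP L, Stmt18.isSRT_srcP hL⟩, ?_⟩, ?_⟩
  · intro a ha b hb hyp
    exact Stmt18.srcP_lt_iff hL ha hb hyp
  · intro T₀ hT₀ T
    have main : ∀ k, ∀ T : {p : ℕ → ℕ × ℕ // IsSRT L p},
        Stmt18.NBound L - Stmt18.fstat L T < k → srtLe L T₀ T := by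
      intro k
      induction k with
      | zero => intro T h; exact absurd h (by omega)
      | succ k ih =>
        intro T hk
        rcases Stmt18.source_or_pred hL T with hsrc | ⟨i, h1, h2, hh, hc⟩
        · have heq := Stmt18.source_unique T₀ T hT₀ hsrc
          rw [← heq]
          exact Relation.ReflTransGen.refl
        · set U : {p : ℕ → ℕ × ℕ // IsSRT L p} :=
            ⟨T.1 ∘ Equiv.swap i (i+1), Stmt18.swap_isSRT T.2 h1 h2 (by omega) hc⟩ with hUdef
          have e1 : U.1 i = T.1 (i+1) := by
            show (T.1 ∘ Equiv.swap i (i+1)) i = T.1 (i+1)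
            simp [Stmt18.swap_val]
          have e2 : U.1 (i+1) = T.1 i := by
            show (T.1 ∘ Equiv.swap i (i+1)) (i+1) = T.1 i
            simp [Stmt18.swap_val]
          have hstep : srtStep L U T := by
            refine ⟨i, h1, h2, Or.inr ⟨?_, ?_⟩⟩
            · rw [e1, e2]; exact hh
            · funext e
              show T.1 e = (T.1 ∘ Equiv.swap i (i+1)) ((Equiv.swap i (i+1)) e)
              simp
          have hfl : Stmt18.fstat L T < Stmt18.fstat L U := by
            rcases Stmt18.step_fstat hstep with heqTU | h
            · exfalso
              have : T.1 i = T.1 (i+1) := by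
                conv_lhs => rw [heqTU]
                exact e1
              rw [this] at hh
              omega
            · exact h
          have hUb := Stmt18.fstat_le_NBound hL U
          exact (ih U (by omega)).tail hstep
    exact main (Stmt18.NBound L - Stmt18.fstat L T + 1) T (by omega)
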